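/- Duality of objective values (Lemma on problem reformulation): Let (x̄, c) be feasible for the enzyme allocation problem with c_r = 0 whenever v̄_r = 0 and v̄_{r*} > 0, and set f = v̄ / v̄_{r*}. Then f ∈ C, f_{r*} = 1, σ(f) ≤ σ(κ(x̄,p)), and v̄_{r*} · Σ_{r ∈ supp(κ)} w_r f_r / κ_r(x̄,p) = c^tot. Conversely, given (x̄, f) with f ∈ C, f_{r*} = 1, σ(f) ≤ σ(κ), defining v̄_{r*} = c^tot / (Σ_{r∈supp(κ)} w_r f_r/κ_r) and c_r = v̄_{r*} f_r/κ_r on supp(κ), c_r = 0 otherwise, yields a feasible solution of the enzyme allocation problem with steady-state flux v̄ = v̄_{r*} f. -/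

import Mathlib

def fluxCone {S R : Type*} [Fintype R] (N : Matrix S R ℝ) (Rirr : Set R) :
    Set (R → ℝ) :=
  {f | N.mulVec f = 0 ∧ ∀ r ∈ Rirr, 0 ≤ f r}

def Conforms {R : Type*} (x y : R → ℝ) : Prop :=
  ∀ r, x r = 0 ∨ (0 < x r ∧ 0 < y r) ∨ (x r < 0 ∧ y r < 0)

/-- duality of objective values between the enzyme allocation
problem and its reformulation over normalized flux modes.  (Note: since
`f r = 0` off `supp κ` when `Conforms f κ`, and division by zero is zero, the
sum `∑ r ∈ supp κ, w r * f r / κ r` equals the total sum `∑ r, w r * f r / κ r`.) -/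
theorem enzyme_allocation_reformulation {S R : Type*} [Fintype S] [Fintype R]
    (N : Matrix S R ℝ) (Rirr : Set R) (κ : R → ℝ) (w : R → ℝ)
    (hw : ∀ r, 0 < w r) (ctot : ℝ) (hctot : 0 < ctot) (rstar : R) :
    -- forward direction
    (∀ c : R → ℝ, (∀ r, 0 ≤ c r) → (∑ r, w r * c r = ctot) →
      (fun r => c r * κ r) ∈ fluxCone N Rirr →
      (∀ r, c r * κ r = 0 → c r = 0) →
      0 < c rstar * κ rstar →
      ∃ f : R → ℝ, f ∈ fluxCone N Rirr ∧ f rstar = 1 ∧ Conforms f κ ∧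
        (∀ r, f r = c r * κ r / (c rstar * κ rstar)) ∧
        (c rstar * κ rstar) * ∑ r, w r * f r / κ r = ctot) ∧
    -- converse direction
    (∀ f : R → ℝ, f ∈ fluxCone N Rirr → f rstar = 1 → Conforms f κ →
      ∃ c : R → ℝ, ∃ vstar : ℝ,
        vstar = ctot / ∑ r, w r * f r / κ r ∧
        (∀ r, c r = if κ r ≠ 0 then vstar * f r / κ r else 0) ∧
        (∀ r, 0 ≤ c r) ∧ (∑ r, w r * c r = ctot) ∧
        (fun r => c r * κ r) = (fun r => vstar * f r) ∧
        (fun r => c r * κ r) ∈ fluxCone N Rirr ∧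
        0 < c rstar * κ rstar) := by
  constructor
  · intro c hc hsum hcone hsupp hpos
    set V := c rstar * κ rstar with hV
    have hVne : V ≠ 0 := ne_of_gt hpos
    refine ⟨fun r => c r * κ r / V, ?_, ?_, ?_, fun r => rfl, ?_⟩
    · obtain ⟨h1, h2⟩ := hcone
      constructor
      · have : (fun r => c r * κ r / V) = V⁻¹ • (fun r => c r * κ r) := by
          funext r; simp [smul_eq_mul, div_eq_inv_mul]
        rw [this, Matrix.mulVec_smul, h1, smul_zero]
      · intro r hr
        exact div_nonneg (h2 r hr) (le_of_lt hpos)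
    · field_simp; exact hV.symm
    · intro r
      rcases lt_trichotomy (c r * κ r) 0 with h | h | h
      · right; right
        constructor
        · exact div_neg_of_neg_of_pos h hpos
        · -- c r ≥ 0, c r * κ r < 0 ⇒ κ r < 0
          rcases (hc r).lt_or_eq with hcr | hcr
          · nlinarith
          · simp [← hcr] at h
      · left; simp [h]
      · right; left
        constructor
        · exact div_pos h hpos
        · rcases (hc r).lt_or_eq with hcr | hcr
          · nlinarith
          · simp [← hcr] at h
    · have key : ∀ r, w r * (c r * κ r / V) / κ r = w r * c r / V := by
        intro r
        by_cases hk : κ r = 0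
        · have : c r = 0 := hsupp r (by simp [hk])
          simp [hk, this]
        · field_simp
      rw [Finset.mul_sum]
      calc ∑ r, V * (w r * (c r * κ r / V) / κ r)
          = ∑ r, w r * c r := by
            refine Finset.sum_congr rfl fun r _ => ?_
            rw [key r]; field_simp
        _ = ctot := hsum
  · intro f hf hfr hconf
    have hκstar : 0 < κ rstar := by
      rcases hconf rstar with h | h | h
      · rw [hfr] at h; norm_num at h
      · exact h.2
      · rw [hfr] at h; linarith [h.1]
    have hterm : ∀ r, 0 ≤ w r * f r / κ r := by
      intro r
      rcases hconf r with h | h | h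
      · simp [h]
      · exact le_of_lt (div_pos (mul_pos (hw r) h.1) h.2)
      · exact le_of_lt (div_pos_of_neg_of_neg (mul_neg_of_pos_of_neg (hw r) h.1) h.2)
    set Ssum := ∑ r, w r * f r / κ r with hS
    have hSpos : 0 < Ssum := by
      have hstar : 0 < w rstar * f rstar / κ rstar := by
        rw [hfr]; exact div_pos (mul_pos (hw rstar) one_pos) hκstar
      exact Finset.sum_pos' (fun r _ => hterm r) ⟨rstar, Finset.mem_univ _, hstar⟩
    set vstar := ctot / Ssum with hv
    have hvpos : 0 < vstar := div_pos hctot hSpos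
    have hfzero : ∀ r, κ r = 0 → f r = 0 := by
      intro r hk
      rcases hconf r with h | h | h
      · exact h
      · rw [hk] at h; linarith [h.2]
      · rw [hk] at h; linarith [h.2]
    refine ⟨fun r => if κ r ≠ 0 then vstar * f r / κ r else 0, vstar, rfl,
      fun r => rfl, ?_, ?_, ?_, ?_, ?_⟩
    · intro r
      by_cases hk : κ r = 0
      · simp [hk]
      · simp only [hk, ne_eq, not_false_iff, if_true]
        rcases hconf r with h | h | h
        · simp [h]
        · exact le_of_lt (div_pos (mul_pos hvpos h.1) h.2)
        · exact le_of_lt (div_pos_of_neg_of_neg (mul_neg_of_pos_of_neg hvpos h.1) h.2)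
    · have : ∀ r, w r * (if κ r ≠ 0 then vstar * f r / κ r else 0)
          = vstar * (w r * f r / κ r) := by
        intro r
        by_cases hk : κ r = 0
        · simp [hk, hfzero r hk]
        · simp only [hk, ne_eq, not_false_iff, if_true]; field_simp
      simp only [this]; simp only [← Finset.mul_sum, ← hS, hv]
      field_simp
    · funext r
      by_cases hk : κ r = 0
      · simp [hk, hfzero r hk]
      · simp only [hk, ne_eq, not_false_iff, if_true]; field_simp
    · have heq : (fun r => (if κ r ≠ 0 then vstar * f r / κ r else 0) * κ r)
          = vstar • f := by
        funext r
        by_cases hk : κ r = 0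
        · simp [hk, hfzero r hk]
        · simp only [hk, ne_eq, not_false_iff, if_true, Pi.smul_apply,
            smul_eq_mul]; field_simp
      rw [heq]
      obtain ⟨h1, h2⟩ := hf
      exact ⟨by rw [Matrix.mulVec_smul, h1, smul_zero],
        fun r hr => mul_nonneg (le_of_lt hvpos) (h2 r hr)⟩
    · have hks : κ rstar ≠ 0 := ne_of_gt hκstar
      simp only [hks, ne_eq, not_false_iff, if_true, hfr]
      field_simp
      positivity
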